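/- (Discrete nabla fractional average Sobolev inequality.) Let 0 < μ₁ < μ₂ < ... < μ_k be non-integers with m_l = ⌈μ_l⌉ for l = 1, ..., k, k ∈ ℕ. Let a ∈ ℤ₊ and b ∈ ℕ with a + m_k < b, and let f : [a−m_k+1, ..., b] → ℝ satisfy ∇^τ f(a) = 0 for τ = 0, 1, ..., m_k − 1. Let r ≥ 1 and let C_l(s) > 0 be defined on [a+1, ..., b] for l = 1, ..., k. Define B_l := Σ_{τ=a+1}^{b} C_l(τ) · ( ∇_{(a+1)*}^{μ_l} f(τ) )², δ* := max_{1≤l≤k} { (1/Γ(μ_l)²) · [ Σ_{j=a+m_l}^{b} ( Σ_{τ=a+1}^{j} ( (j−τ+1)^{↑(μ_l−1)} )² )^{r/2} ]^{2/r} }, and ρ* := max_{1≤l≤k} max_{τ ∈ [a+1,...,b]} (1/C_l(τ)). Then ( Σ_{j=a+m_k}^{b} |f(j)|^r )^{1/r} ≤ sqrt(δ* · ρ*) · ( (Σ_{l=1}^{k} B_l) / k )^{1/2}. -/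

import Mathlib

open Finset

/-- Backward (nabla) difference: `∇f(t) = f(t) - f(t-1)`. -/
def nabla (f : ℤ → ℝ) : ℤ → ℝ := fun t => f t - f (t - 1)

/-- Rising factorial `t^{↑α} = Γ(t+α)/Γ(t)`. -/
noncomputable def risingFac (t α : ℝ) : ℝ := Real.Gamma (t + α) / Real.Gamma t

/-- The `ν`-th order nabla fractional sum `∇_a^{-ν} f (t) = Σ_{s=a}^{t} (t-s+1)^{↑(ν-1)}/Γ(ν) · f(s)`. -/
noncomputable def fracSum (ν : ℝ) (a : ℤ) (f : ℤ → ℝ) : ℤ → ℝ := fun t =>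
  ∑ s ∈ Finset.Icc a t, risingFac ((t - s + 1 : ℤ) : ℝ) (ν - 1) / Real.Gamma ν * f s

/-- Caputo-like nabla fractional difference `∇_{a*}^{μ} f = ∇_a^{-(m-μ)} (∇^m f)`, `m = ⌈μ⌉`. -/
noncomputable def caputoNabla (μ : ℝ) (a : ℤ) (f : ℤ → ℝ) : ℤ → ℝ :=
  fracSum ((⌈μ⌉₊ : ℝ) - μ) a (nabla^[⌈μ⌉₊] f)

section AuxSobolev

noncomputable def ascR (x : ℝ) (n : ℕ) : ℝ := ∏ j ∈ Finset.range n, (x + j)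

lemma ascR_succ (x : ℝ) (n : ℕ) : ascR x (n+1) = ascR x n * (x + n) :=
  Finset.prod_range_succ _ _

lemma Gamma_add_nat {x : ℝ} (hx : 0 < x) (n : ℕ) :
    Real.Gamma (n + x) = ascR x n * Real.Gamma x := by
  induction n with
  | zero => simp [ascR]
  | succ n ih =>
      have hne : (n : ℝ) + x ≠ 0 := by positivity
      have h : ((n+1 : ℕ) : ℝ) + x = ((n:ℝ) + x) + 1 := by push_cast; ring
      rw [h, Real.Gamma_add_one hne, ih, ascR_succ]; ring

lemma hockey (c D : ℕ) : ∑ d ∈ Finset.range (D+1), (d + c).choose c = (D + c + 1).choose (c+1) := by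
  induction D with
  | zero => simp
  | succ D ih =>
      rw [Finset.sum_range_succ, ih, show D+1+c = D+c+1 by omega,
        Nat.choose_succ_succ (D+c+1) c]
      simp only [Nat.succ_eq_add_one]; omega

lemma ascR_vandermonde (x y : ℝ) (n : ℕ) :
    ∑ i ∈ Finset.range (n+1), (n.choose i : ℝ) * (ascR x i * ascR y (n - i)) = ascR (x + y) n := by
  induction n with
  | zero => simp [ascR]
  | succ n ih =>
      have key : ∀ i ∈ Finset.range (n+1),
          (n.choose i : ℝ) * (ascR x (i+1) * ascR y (n - i))
          + (n.choose i : ℝ) * (ascR x i * ascR y (n - i + 1))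
          = ((n.choose i : ℝ) * (ascR x i * ascR y (n - i))) * (x + y + n) := by
        intro i hi
        have hi' : i ≤ n := Nat.lt_succ_iff.mp (Finset.mem_range.mp hi)
        have hc : ((n - i : ℕ) : ℝ) = (n : ℝ) - i := by
          exact Nat.cast_sub hi'
        rw [ascR_succ, ascR_succ, hc]; ring
      -- split the (n+1) sum
      have hsplit : ∑ i ∈ Finset.range (n+2), ((n+1).choose i : ℝ) * (ascR x i * ascR y (n+1-i))
          = ∑ i ∈ Finset.range (n+1), ((n.choose i : ℝ) * (ascR x (i+1) * ascR y (n - i))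
              + (n.choose i : ℝ) * (ascR x i * ascR y (n - i + 1))) := by
        rw [Finset.sum_range_succ']
        have e1 : ∀ i ∈ Finset.range (n+1),
            ((n+1).choose (i+1) : ℝ) * (ascR x (i+1) * ascR y (n+1-(i+1)))
            = (n.choose i : ℝ) * (ascR x (i+1) * ascR y (n - i))
              + (n.choose (i+1) : ℝ) * (ascR x (i+1) * ascR y (n - i)) := by
          intro i hi
          rw [show n+1-(i+1) = n - i by omega, Nat.choose_succ_succ n i]
          push_cast; ring
        rw [Finset.sum_congr rfl e1, Finset.sum_add_distrib]
        -- now handle the shifted middle sum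
        have e2 : ∑ i ∈ Finset.range (n+1), (n.choose (i+1) : ℝ) * (ascR x (i+1) * ascR y (n - i))
            = ∑ i ∈ Finset.range (n+1), (n.choose i : ℝ) * (ascR x i * ascR y (n - i + 1))
              - (n.choose 0 : ℝ) * (ascR x 0 * ascR y (n - 0 + 1)) := by
          rw [Finset.sum_range_succ' (fun i => (n.choose i : ℝ) * (ascR x i * ascR y (n - i + 1))) n]
          have e3 : ∀ i ∈ Finset.range n,
              (n.choose (i+1) : ℝ) * (ascR x (i+1) * ascR y (n - (i+1) + 1))
              = (n.choose (i+1) : ℝ) * (ascR x (i+1) * ascR y (n - i)) := by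
            intro i hi
            have hin := Finset.mem_range.mp hi
            rw [show n - (i+1) + 1 = n - i by omega]
          rw [Finset.sum_congr rfl e3, Finset.sum_range_succ]
          simp [Nat.choose_succ_self]
        rw [e2]
        have e4 : ((n+1).choose 0 : ℝ) * (ascR x 0 * ascR y (n+1-0))
            = (n.choose 0 : ℝ) * (ascR x 0 * ascR y (n - 0 + 1)) := by
          norm_num [show n + 1 - 0 = n - 0 + 1 by omega]
        rw [e4, Finset.sum_add_distrib]; ring
      rw [hsplit, Finset.sum_congr rfl key, ← Finset.sum_mul, ih, ← ascR_succ]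

lemma sum_Icc_succ_top' {a j : ℤ} (h : a ≤ j + 1) (F : ℤ → ℝ) :
    ∑ s ∈ Finset.Icc a (j+1), F s = (∑ s ∈ Finset.Icc a j, F s) + F (j+1) := by
  have : Finset.Icc a (j+1) = insert (j+1) (Finset.Icc a j) := by
    ext x; simp only [Finset.mem_Icc, Finset.mem_insert]; omega
  rw [this, Finset.sum_insert (by simp)]; ring

lemma sum_nabla (f : ℤ → ℝ) (a : ℤ) : ∀ j, a ≤ j →
    ∑ s ∈ Finset.Icc (a+1) j, nabla f s = f j - f a := by
  refine Int.le_induction ?_ ?_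
  · rw [show Finset.Icc (a+1) a = ∅ from Finset.Icc_eq_empty (by omega)]; simp
  · intro j hj ih
    rw [sum_Icc_succ_top' (by omega), ih]; simp [nabla]

lemma sum_Icc_eq_range (F : ℤ → ℝ) (τ : ℤ) : ∀ j, τ ≤ j →
    ∑ s ∈ Finset.Icc τ j, F s = ∑ d ∈ Finset.range ((j - τ).toNat + 1), F (τ + d) := by
  refine Int.le_induction ?_ ?_
  · simp
  · intro j hj ih
    rw [sum_Icc_succ_top' (by omega), ih, show (j + 1 - τ).toNat + 1 = ((j - τ).toNat + 1) + 1 by omega,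
      Finset.sum_range_succ (fun d : ℕ => F (τ + d)) ((j - τ).toNat + 1)]
    have h2 : (τ + (((j - τ).toNat + 1 : ℕ) : ℤ)) = j + 1 := by push_cast; omega
    rw [h2]

lemma taylor : ∀ m : ℕ, 1 ≤ m → ∀ f : ℤ → ℝ, ∀ a : ℤ, (∀ τ < m, nabla^[τ] f a = 0) →
    ∀ j : ℤ, a ≤ j →
    f j = ∑ τ ∈ Finset.Icc (a+1) j, (((j - τ).toNat + (m-1)).choose (m-1) : ℝ) * (nabla^[m] f) τ := by
  intro m
  induction m with
  | zero => omega
  | succ m ih =>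
      intro _ f a h0 j hj
      have hfa : f a = 0 := h0 0 (by omega)
      have t1 : f j = ∑ s ∈ Finset.Icc (a+1) j, nabla f s := by
        rw [sum_nabla f a j hj, hfa, sub_zero]
      rcases Nat.eq_zero_or_pos m with hm | hm
      · subst hm
        simpa using t1
      · have hg : ∀ τ < m, nabla^[τ] (nabla f) a = 0 := by
          intro τ hτ
          rw [← Function.iterate_succ_apply]
          exact h0 (τ+1) (by omega)
        have t2 : ∀ s ∈ Finset.Icc (a+1) j, nabla f s
            = ∑ τ ∈ Finset.Icc (a+1) s, (((s - τ).toNat + (m-1)).choose (m-1) : ℝ) * (nabla^[m] (nabla f)) τ := by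
          intro s hs
          exact ih hm (nabla f) a hg s (by have := (Finset.mem_Icc.mp hs).1; omega)
        rw [t1, Finset.sum_congr rfl t2,
          Finset.sum_comm' (s' := fun τ => Finset.Icc τ j) (t' := Finset.Icc (a+1) j)
            (by intro s τ; simp only [Finset.mem_Icc]; omega)]
        refine Finset.sum_congr rfl ?_
        intro τ hτ
        have hτj : τ ≤ j := (Finset.mem_Icc.mp hτ).2
        rw [← Finset.sum_mul, Function.iterate_succ_apply]
        congr 1
        rw [sum_Icc_eq_range _ τ j hτj]
        have e : ∀ d ∈ Finset.range ((j - τ).toNat + 1),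
            (((τ + (d:ℤ) - τ).toNat + (m-1)).choose (m-1) : ℝ) = (((d + (m-1)).choose (m-1) : ℕ) : ℝ) := by
          intro d _
          congr 2
          omega
        rw [Finset.sum_congr rfl e, ← Nat.cast_sum, hockey (m-1) ((j - τ).toNat)]
        congr 2 <;> omega

lemma risingFac_nat (ν : ℝ) (n : ℕ) :
    risingFac ((n : ℝ) + 1) (ν - 1) = Real.Gamma ((n : ℝ) + ν) / (n.factorial : ℝ) := by
  unfold risingFac
  rw [show (n:ℝ) + 1 + (ν - 1) = (n:ℝ) + ν by ring, Real.Gamma_nat_eq_factorial]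

/-- Key convolution/Vandermonde computation. -/

lemma kernel_conv (μ : ℝ) (hμ : 0 < μ) (hν : 0 < (⌈μ⌉₊ : ℝ) - μ) (N : ℕ) :
    ∑ d ∈ Finset.range (N + 1),
      (Real.Gamma (((N - d : ℕ) : ℝ) + μ) / ((N - d).factorial : ℝ) / Real.Gamma μ) *
      (Real.Gamma ((d : ℝ) + ((⌈μ⌉₊ : ℝ) - μ)) / (d.factorial : ℝ) / Real.Gamma ((⌈μ⌉₊ : ℝ) - μ))
      = ((N + (⌈μ⌉₊ - 1)).choose (⌈μ⌉₊ - 1) : ℝ) := by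
  set m := ⌈μ⌉₊ with hm
  have hm1 : 1 ≤ m := Nat.one_le_iff_ne_zero.mpr (by
    intro h; rw [hm] at h; exact absurd (Nat.ceil_eq_zero.mp h) (not_le.mpr hμ))
  set ν : ℝ := (m : ℝ) - μ with hνdef
  have hΓμ : Real.Gamma μ ≠ 0 := ne_of_gt (Real.Gamma_pos_of_pos hμ)
  have hΓν : Real.Gamma ν ≠ 0 := ne_of_gt (Real.Gamma_pos_of_pos hν)
  have step1 : ∀ d ∈ Finset.range (N+1),
      (Real.Gamma (((N - d : ℕ) : ℝ) + μ) / ((N - d).factorial : ℝ) / Real.Gamma μ) *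
      (Real.Gamma ((d : ℝ) + ν) / (d.factorial : ℝ) / Real.Gamma ν)
      = (N.choose d : ℝ) * (ascR ν d * ascR μ (N - d)) / (N.factorial : ℝ) := by
    intro d hd
    have hdN : d ≤ N := Nat.lt_succ_iff.mp (Finset.mem_range.mp hd)
    rw [Gamma_add_nat hμ (N - d), Gamma_add_nat hν d]
    have hfact : (N.choose d : ℝ) * d.factorial * (N - d).factorial = N.factorial := by
      exact_mod_cast congrArg (Nat.cast : ℕ → ℝ) (Nat.choose_mul_factorial_mul_factorial hdN)
    have h1 : ((N - d).factorial : ℝ) ≠ 0 := Nat.cast_ne_zero.mpr (Nat.factorial_ne_zero _)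
    have h2 : (d.factorial : ℝ) ≠ 0 := Nat.cast_ne_zero.mpr (Nat.factorial_ne_zero _)
    have h3 : (N.factorial : ℝ) ≠ 0 := Nat.cast_ne_zero.mpr (Nat.factorial_ne_zero _)
    field_simp
    linear_combination (-(ascR μ (N - d)) * ascR ν d) * hfact
  rw [Finset.sum_congr rfl step1, ← Finset.sum_div]
  rw [show ∑ d ∈ Finset.range (N+1), (N.choose d : ℝ) * (ascR ν d * ascR μ (N - d))
      = ascR (ν + μ) N from ascR_vandermonde ν μ N]
  have hmR : (0:ℝ) < (m:ℝ) := by exact_mod_cast Nat.lt_of_lt_of_le Nat.zero_lt_one hm1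
  have hΓm : Real.Gamma (m:ℝ) ≠ 0 := ne_of_gt (Real.Gamma_pos_of_pos hmR)
  have hasc : ascR ((m:ℝ)) N * Real.Gamma (m:ℝ) = Real.Gamma ((N:ℝ) + (m:ℝ)) :=
    (Gamma_add_nat hmR N).symm
  have hg1 : Real.Gamma ((N:ℝ) + (m:ℝ)) = ((N + m - 1).factorial : ℝ) := by
    rw [show (N:ℝ) + (m:ℝ) = (((N + m - 1 : ℕ)):ℝ) + 1 by
      exact_mod_cast congrArg (Nat.cast : ℕ → ℝ) (show N + m = N + m - 1 + 1 by omega)]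
    exact Real.Gamma_nat_eq_factorial (N + m - 1)
  have hg2 : Real.Gamma ((m:ℝ)) = ((m - 1).factorial : ℝ) := by
    rw [show (m:ℝ) = (((m - 1 : ℕ)):ℝ) + 1 by
      exact_mod_cast congrArg (Nat.cast : ℕ → ℝ) (show m = m - 1 + 1 by omega)]
    exact Real.Gamma_nat_eq_factorial (m - 1)
  have hνμ : ν + μ = (m:ℝ) := by rw [hνdef]; ring
  rw [hνμ]
  have hch : ((N + (m-1)).choose (m-1) : ℝ) * ((m-1).factorial : ℝ) * (N.factorial : ℝ)
      = ((N + m - 1).factorial : ℝ) := by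
    have h := Nat.choose_mul_factorial_mul_factorial (show m - 1 ≤ N + (m-1) by omega)
    have h2 : N + (m-1) - (m-1) = N := by omega
    rw [h2] at h
    rw [show N + m - 1 = N + (m - 1) by omega]
    exact_mod_cast congrArg (Nat.cast : ℕ → ℝ) h
  have hN : (N.factorial : ℝ) ≠ 0 := Nat.cast_ne_zero.mpr (Nat.factorial_ne_zero _)
  have hm1f : ((m-1).factorial : ℝ) ≠ 0 := Nat.cast_ne_zero.mpr (Nat.factorial_ne_zero _)
  have hascval : ascR ((m:ℝ)) N = ((N + m - 1).factorial : ℝ) / ((m-1).factorial : ℝ) := by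
    field_simp [hg2] at hasc ⊢
    rw [← hg2, hasc, hg1]
  rw [hascval]
  field_simp
  linear_combination -hch

lemma representation (μ : ℝ) (hμ : 0 < μ) (hν : 0 < (⌈μ⌉₊ : ℝ) - μ)
    (f : ℤ → ℝ) (a : ℤ) (h0 : ∀ τ < ⌈μ⌉₊, nabla^[τ] f a = 0)
    (j : ℤ) (hj : a ≤ j) :
    f j = ∑ τ ∈ Finset.Icc (a+1) j,
      risingFac ((j - τ + 1 : ℤ) : ℝ) (μ - 1) / Real.Gamma μ * caputoNabla μ (a+1) f τ := by
  have hm1 : 1 ≤ ⌈μ⌉₊ := Nat.one_le_iff_ne_zero.mpr (fun h =>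
    absurd (Nat.ceil_eq_zero.mp h) (not_le.mpr hμ))
  have e1 : ∀ τ ∈ Finset.Icc (a+1) j,
      risingFac ((j - τ + 1 : ℤ) : ℝ) (μ - 1) / Real.Gamma μ * caputoNabla μ (a+1) f τ
      = ∑ s ∈ Finset.Icc (a+1) τ,
          (Real.Gamma (((j-τ).toNat:ℝ) + μ) / ((j-τ).toNat.factorial : ℝ) / Real.Gamma μ)
          * ((Real.Gamma (((τ-s).toNat:ℝ) + ((⌈μ⌉₊:ℝ) - μ)) / ((τ-s).toNat.factorial : ℝ)
              / Real.Gamma ((⌈μ⌉₊:ℝ) - μ)) * (nabla^[⌈μ⌉₊] f) s) := by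
    intro τ hτ
    obtain ⟨hτ1, hτ2⟩ := Finset.mem_Icc.mp hτ
    simp only [caputoNabla, fracSum, Finset.mul_sum]
    refine Finset.sum_congr rfl ?_
    intro s hs
    obtain ⟨hs1, hs2⟩ := Finset.mem_Icc.mp hs
    have c1 : ((j - τ + 1 : ℤ) : ℝ) = (((j-τ).toNat : ℕ):ℝ) + 1 := by
      have h' := congrArg (Int.cast : ℤ → ℝ) (Int.toNat_of_nonneg (show (0:ℤ) ≤ j - τ by omega))
      push_cast at h' ⊢ <;> linarith
    have c2 : ((τ - s + 1 : ℤ) : ℝ) = (((τ-s).toNat : ℕ):ℝ) + 1 := by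
      have h' := congrArg (Int.cast : ℤ → ℝ) (Int.toNat_of_nonneg (show (0:ℤ) ≤ τ - s by omega))
      push_cast at h' ⊢ <;> linarith
    rw [c1, c2, risingFac_nat, risingFac_nat]
  rw [Finset.sum_congr rfl e1,
    Finset.sum_comm' (s' := fun s => Finset.Icc s j) (t' := Finset.Icc (a+1) j)
      (by intro τ s; simp only [Finset.mem_Icc]; omega),
    taylor ⌈μ⌉₊ hm1 f a h0 j hj]
  refine Finset.sum_congr rfl ?_
  intro s hs
  obtain ⟨hs1, hs2⟩ := Finset.mem_Icc.mp hs
  rw [show ∑ τ ∈ Finset.Icc s j,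
      (Real.Gamma (((j-τ).toNat:ℝ) + μ) / ((j-τ).toNat.factorial : ℝ) / Real.Gamma μ)
      * ((Real.Gamma (((τ-s).toNat:ℝ) + ((⌈μ⌉₊:ℝ) - μ)) / ((τ-s).toNat.factorial : ℝ)
          / Real.Gamma ((⌈μ⌉₊:ℝ) - μ)) * (nabla^[⌈μ⌉₊] f) s)
      = (∑ τ ∈ Finset.Icc s j,
          (Real.Gamma (((j-τ).toNat:ℝ) + μ) / ((j-τ).toNat.factorial : ℝ) / Real.Gamma μ)
          * (Real.Gamma (((τ-s).toNat:ℝ) + ((⌈μ⌉₊:ℝ) - μ)) / ((τ-s).toNat.factorial : ℝ)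
              / Real.Gamma ((⌈μ⌉₊:ℝ) - μ))) * (nabla^[⌈μ⌉₊] f) s from by
    rw [Finset.sum_mul]; exact Finset.sum_congr rfl fun _ _ => by ring]
  congr 1
  rw [sum_Icc_eq_range _ s j hs2]
  have e3 : ∀ d ∈ Finset.range ((j - s).toNat + 1),
      (Real.Gamma (((j-(s+(d:ℤ))).toNat:ℝ) + μ) / ((j-(s+(d:ℤ))).toNat.factorial : ℝ) / Real.Gamma μ)
      * (Real.Gamma ((((s+(d:ℤ))-s).toNat:ℝ) + ((⌈μ⌉₊:ℝ) - μ)) / (((s+(d:ℤ))-s).toNat.factorial : ℝ)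
          / Real.Gamma ((⌈μ⌉₊:ℝ) - μ))
      = (Real.Gamma ((((j-s).toNat - d : ℕ) : ℝ) + μ) / (((j-s).toNat - d).factorial : ℝ) / Real.Gamma μ)
      * (Real.Gamma ((d : ℝ) + ((⌈μ⌉₊:ℝ) - μ)) / (d.factorial : ℝ) / Real.Gamma ((⌈μ⌉₊:ℝ) - μ)) := by
    intro d hd
    have h1 : (j - (s + (d:ℤ))).toNat = (j - s).toNat - d := by omega
    have h2 : ((s + (d:ℤ)) - s).toNat = d := by omega
    rw [h1, h2]
  rw [Finset.sum_congr rfl e3, kernel_conv μ hμ hν ((j - s).toNat)]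

end AuxSobolev

/-- Discrete nabla fractional average Sobolev inequality. -/
theorem discrete_nabla_fractional_average_sobolev
    (k : ℕ) (hk : 1 ≤ k) (μ : ℕ → ℝ) (m : ℕ → ℕ)
    (hμpos : ∀ l ∈ Finset.Icc 1 k, 0 < μ l)
    (hμint : ∀ l ∈ Finset.Icc 1 k, ∀ n : ℤ, μ l ≠ n)
    (hμmono : ∀ l l', 1 ≤ l → l < l' → l' ≤ k → μ l < μ l')
    (hm : ∀ l ∈ Finset.Icc 1 k, m l = ⌈μ l⌉₊)
    (a : ℕ) (b : ℤ) (hb : (a : ℤ) + m k < b)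
    (f : ℤ → ℝ) (hf0 : ∀ τ < m k, nabla^[τ] f a = 0)
    (r : ℝ) (hr : 1 ≤ r)
    (C : ℕ → ℤ → ℝ)
    (hC : ∀ l ∈ Finset.Icc 1 k, ∀ s ∈ Finset.Icc ((a : ℤ) + 1) b, 0 < C l s) :
    let B : ℕ → ℝ := fun l =>
      ∑ τ ∈ Finset.Icc ((a : ℤ) + 1) b, C l τ * caputoNabla (μ l) ((a : ℤ) + 1) f τ ^ 2
    let δs : ℝ := (Finset.Icc 1 k).sup' (Finset.nonempty_Icc.mpr hk) fun l =>
      (1 / Real.Gamma (μ l) ^ 2) *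
        (∑ j ∈ Finset.Icc ((a : ℤ) + m l) b,
          (∑ τ ∈ Finset.Icc ((a : ℤ) + 1) j,
            risingFac ((j - τ + 1 : ℤ) : ℝ) (μ l - 1) ^ 2) ^ (r / 2)) ^ (2 / r)
    let ρs : ℝ := (Finset.Icc 1 k).sup' (Finset.nonempty_Icc.mpr hk) fun l =>
      sSup ((fun τ : ℤ => (C l τ)⁻¹) '' Set.Icc ((a : ℤ) + 1) b)
    (∑ j ∈ Finset.Icc ((a : ℤ) + m k) b, |f j| ^ r) ^ (1 / r) ≤
      Real.sqrt (δs * ρs) * ((∑ l ∈ Finset.Icc 1 k, B l) / k) ^ ((1 : ℝ) / 2) := by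
  intro B δs ρs
  have hkm : k ∈ Finset.Icc 1 k := Finset.mem_Icc.mpr ⟨hk, le_refl k⟩
  have hr0 : (0:ℝ) < r := lt_of_lt_of_le one_pos hr
  have hrne : r ≠ 0 := ne_of_gt hr0
  have hm1 : ∀ l ∈ Finset.Icc 1 k, 1 ≤ m l := fun l hl => by
    rw [hm l hl]
    exact Nat.one_le_iff_ne_zero.mpr (fun h =>
      absurd (Nat.ceil_eq_zero.mp h) (not_le.mpr (hμpos l hl)))
  have hmlk : ∀ l ∈ Finset.Icc 1 k, m l ≤ m k := by
    intro l hl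
    obtain ⟨hl1, hl2⟩ := Finset.mem_Icc.mp hl
    rcases eq_or_lt_of_le hl2 with h | h
    · rw [h]
    · rw [hm l hl, hm k hkm]
      exact Nat.ceil_mono (le_of_lt (hμmono l k hl1 h (le_refl k)))
  have hab : (a:ℤ) + 1 ≤ b := by have := hm1 k hkm; omega
  have hνl : ∀ l ∈ Finset.Icc 1 k, 0 < (⌈μ l⌉₊:ℝ) - μ l := by
    intro l hl
    have h1 : μ l ≤ (⌈μ l⌉₊:ℝ) := Nat.le_ceil _
    have h2 : μ l ≠ ((⌈μ l⌉₊:ℝ)) := by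
      have h3 := hμint l hl (⌈μ l⌉₊ : ℤ)
      intro h4; exact h3 (h4.trans (Int.cast_natCast _).symm)
    have := lt_of_le_of_ne h1 h2
    linarith
  have hBnn : ∀ l ∈ Finset.Icc 1 k, 0 ≤ B l := fun l hl =>
    Finset.sum_nonneg fun τ hτ => mul_nonneg (le_of_lt (hC l hl τ hτ)) (sq_nonneg _)
  have hρsC : ∀ l ∈ Finset.Icc 1 k, ∀ τ ∈ Finset.Icc ((a:ℤ)+1) b, (C l τ)⁻¹ ≤ ρs := by
    intro l hl τ hτ
    refine le_trans (le_csSup ((Set.finite_Icc ((a:ℤ)+1) b).image (fun τ : ℤ => (C l τ)⁻¹)).bddAbove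
      (Set.mem_image_of_mem _ (by simpa [Set.mem_Icc] using Finset.mem_Icc.mp hτ))) ?_
    exact Finset.le_sup' (fun l' => sSup ((fun τ : ℤ => (C l' τ)⁻¹) '' Set.Icc ((a : ℤ) + 1) b)) hl
  have habmem : (a:ℤ)+1 ∈ Finset.Icc ((a:ℤ)+1) b := Finset.mem_Icc.mpr ⟨le_refl _, hab⟩
  have hρs0 : 0 < ρs :=
    lt_of_lt_of_le (inv_pos.mpr (hC k hkm _ habmem)) (hρsC k hkm _ habmem)
  have hδs0 : 0 ≤ δs := by
    refine le_trans ?_ (Finset.le_sup' _ hkm)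
    have h1 : (0:ℝ) ≤ 1 / Real.Gamma (μ k) ^ 2 := by positivity
    refine mul_nonneg h1 (Real.rpow_nonneg (Finset.sum_nonneg fun j _ =>
      Real.rpow_nonneg (Finset.sum_nonneg fun τ _ => sq_nonneg _) _) _)
  set P : ℝ := ∑ j ∈ Finset.Icc ((a:ℤ) + m k) b, |f j| ^ r with hPdef
  have hP : 0 ≤ P := Finset.sum_nonneg fun j _ => Real.rpow_nonneg (abs_nonneg _) _
  -- key per-l estimate
  have key : ∀ l ∈ Finset.Icc 1 k, P ^ ((2:ℝ)/r) ≤ δs * ρs * B l := by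
    intro l hl
    set G : ℝ := Real.Gamma (μ l) with hGdef
    have hG0 : 0 < G := Real.Gamma_pos_of_pos (hμpos l hl)
    set S : ℤ → ℝ := fun j => ∑ τ ∈ Finset.Icc ((a:ℤ)+1) j,
      risingFac ((j - τ + 1 : ℤ) : ℝ) (μ l - 1) ^ 2 with hSdef
    have hSnn : ∀ j, 0 ≤ S j := fun j => Finset.sum_nonneg fun τ _ => sq_nonneg _
    set c : ℝ := 1/G^2 * (ρs * B l) with hcdef
    have hc : 0 ≤ c := by
      have := hBnn l hl
      have := hρs0.le
      positivity
    have hX : ∀ j ∈ Finset.Icc ((a:ℤ) + (m k : ℤ)) b, (f j)^2 ≤ c * S j := by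
      intro j hj
      obtain ⟨hj1, hj2⟩ := Finset.mem_Icc.mp hj
      have hmk1 := hm1 k hkm
      have haj : (a:ℤ) ≤ j := by omega
      have h0l : ∀ τ < ⌈μ l⌉₊, nabla^[τ] f a = 0 := by
        intro τ hτ
        refine hf0 τ ?_
        have h5 : ⌈μ l⌉₊ = m l := (hm l hl).symm
        have := hmlk l hl
        omega
      have hrep := representation (μ l) (hμpos l hl) (hνl l hl) f a h0l j haj
      have hcs := Finset.sum_mul_sq_le_sq_mul_sq (Finset.Icc ((a:ℤ)+1) j)
        (fun τ => risingFac ((j - τ + 1 : ℤ) : ℝ) (μ l - 1) / G)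
        (fun τ => caputoNabla (μ l) ((a:ℤ)+1) f τ)
      have eq1 : ∑ τ ∈ Finset.Icc ((a:ℤ)+1) j,
          (risingFac ((j - τ + 1 : ℤ) : ℝ) (μ l - 1) / G) ^ 2 = 1/G^2 * S j := by
        rw [hSdef, Finset.mul_sum]
        exact Finset.sum_congr rfl fun τ _ => by rw [div_pow]; ring
      have hX2 : ∑ τ ∈ Finset.Icc ((a:ℤ)+1) j, caputoNabla (μ l) ((a:ℤ)+1) f τ ^ 2
          ≤ ρs * B l := by
        have sub1 : ∑ τ ∈ Finset.Icc ((a:ℤ)+1) j, caputoNabla (μ l) ((a:ℤ)+1) f τ ^ 2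
            ≤ ∑ τ ∈ Finset.Icc ((a:ℤ)+1) b, caputoNabla (μ l) ((a:ℤ)+1) f τ ^ 2 :=
          Finset.sum_le_sum_of_subset_of_nonneg (Finset.Icc_subset_Icc_right hj2)
            (fun _ _ _ => sq_nonneg _)
        have sub2 : ∑ τ ∈ Finset.Icc ((a:ℤ)+1) b, caputoNabla (μ l) ((a:ℤ)+1) f τ ^ 2
            ≤ ∑ τ ∈ Finset.Icc ((a:ℤ)+1) b, ρs * (C l τ * caputoNabla (μ l) ((a:ℤ)+1) f τ ^ 2) := by
          refine Finset.sum_le_sum fun τ hτ => ?_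
          have hCpos := hC l hl τ hτ
          have h1 : caputoNabla (μ l) ((a:ℤ)+1) f τ ^ 2
              = (C l τ)⁻¹ * (C l τ * caputoNabla (μ l) ((a:ℤ)+1) f τ ^ 2) := by
            field_simp
          calc caputoNabla (μ l) ((a:ℤ)+1) f τ ^ 2
              = (C l τ)⁻¹ * (C l τ * caputoNabla (μ l) ((a:ℤ)+1) f τ ^ 2) := h1
            _ ≤ ρs * (C l τ * caputoNabla (μ l) ((a:ℤ)+1) f τ ^ 2) :=
              mul_le_mul_of_nonneg_right (hρsC l hl τ hτ)
                (mul_nonneg hCpos.le (sq_nonneg _))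
        rw [← Finset.mul_sum] at sub2
        exact le_trans sub1 sub2
      calc (f j)^2 = (∑ τ ∈ Finset.Icc ((a:ℤ)+1) j,
            risingFac ((j - τ + 1 : ℤ) : ℝ) (μ l - 1) / G * caputoNabla (μ l) ((a:ℤ)+1) f τ)^2 := by
            rw [← hrep]
        _ ≤ (∑ τ ∈ Finset.Icc ((a:ℤ)+1) j, (risingFac ((j - τ + 1 : ℤ) : ℝ) (μ l - 1) / G) ^ 2)
            * (∑ τ ∈ Finset.Icc ((a:ℤ)+1) j, caputoNabla (μ l) ((a:ℤ)+1) f τ ^ 2) := hcs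
        _ ≤ (1/G^2 * S j) * (ρs * B l) := by
            rw [eq1]
            refine mul_le_mul_of_nonneg_left hX2 ?_
            have := hSnn j
            positivity
        _ = c * S j := by rw [hcdef]; ring
    -- sum the pointwise rpow bound
    set T : ℝ := ∑ j ∈ Finset.Icc ((a:ℤ) + m l) b, (S j) ^ (r/2) with hTdef
    have hT : 0 ≤ T := Finset.sum_nonneg fun j _ => Real.rpow_nonneg (hSnn j) _
    have hfr : ∀ j ∈ Finset.Icc ((a:ℤ) + (m k : ℤ)) b,
        |f j| ^ r ≤ c ^ (r/2) * (S j) ^ (r/2) := by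
      intro j hj
      have habs : ((f j)^2) ^ (r/2) = |f j| ^ r := by
        rw [← sq_abs, ← Real.rpow_natCast |f j| 2, ← Real.rpow_mul (abs_nonneg (f j))]
        norm_num
        congr 1
        ring
      calc |f j| ^ r = ((f j)^2) ^ (r/2) := habs.symm
        _ ≤ (c * S j) ^ (r/2) := Real.rpow_le_rpow (sq_nonneg _) (hX j hj) (by positivity)
        _ = c ^ (r/2) * (S j) ^ (r/2) := Real.mul_rpow hc (hSnn j)
    have hsum : P ≤ c ^ (r/2) * T := by
      calc P ≤ ∑ j ∈ Finset.Icc ((a:ℤ) + (m k : ℤ)) b, c ^ (r/2) * (S j) ^ (r/2) :=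
            Finset.sum_le_sum hfr
        _ = c ^ (r/2) * ∑ j ∈ Finset.Icc ((a:ℤ) + (m k : ℤ)) b, (S j) ^ (r/2) := by
            rw [Finset.mul_sum]
        _ ≤ c ^ (r/2) * T := by
            refine mul_le_mul_of_nonneg_left ?_ (Real.rpow_nonneg hc _)
            refine Finset.sum_le_sum_of_subset_of_nonneg
              (Finset.Icc_subset_Icc ?_ le_rfl) (fun j _ _ => Real.rpow_nonneg (hSnn j) _)
            have := hmlk l hl
            omega
    have hstep : P ^ ((2:ℝ)/r) ≤ c * T ^ ((2:ℝ)/r) := by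
      calc P ^ ((2:ℝ)/r) ≤ (c ^ (r/2) * T) ^ ((2:ℝ)/r) :=
            Real.rpow_le_rpow hP hsum (by positivity)
        _ = (c ^ (r/2)) ^ ((2:ℝ)/r) * T ^ ((2:ℝ)/r) :=
            Real.mul_rpow (Real.rpow_nonneg hc _) hT
        _ = c * T ^ ((2:ℝ)/r) := by
            rw [← Real.rpow_mul hc, show (r/2) * ((2:ℝ)/r) = 1 by field_simp, Real.rpow_one]
    have hδl : 1/G^2 * T ^ ((2:ℝ)/r) ≤ δs :=
      Finset.le_sup' (fun l' => (1 / Real.Gamma (μ l') ^ 2) *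
          (∑ j ∈ Finset.Icc ((a : ℤ) + m l') b,
            (∑ τ ∈ Finset.Icc ((a : ℤ) + 1) j,
              risingFac ((j - τ + 1 : ℤ) : ℝ) (μ l' - 1) ^ 2) ^ (r / 2)) ^ (2 / r)) hl
    calc P ^ ((2:ℝ)/r) ≤ c * T ^ ((2:ℝ)/r) := hstep
      _ = (ρs * B l) * (1/G^2 * T ^ ((2:ℝ)/r)) := by rw [hcdef]; ring
      _ ≤ (ρs * B l) * δs :=
          mul_le_mul_of_nonneg_left hδl (mul_nonneg hρs0.le (hBnn l hl))
      _ = δs * ρs * B l := by ring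
  -- average over l
  have hkR : (0:ℝ) < (k:ℝ) := by exact_mod_cast Nat.lt_of_lt_of_le Nat.zero_lt_one hk
  have hsumk : (k:ℝ) * P ^ ((2:ℝ)/r) ≤ δs * ρs * ∑ l ∈ Finset.Icc 1 k, B l := by
    have h1 := Finset.sum_le_sum key
    rw [Finset.sum_const, Nat.card_Icc] at h1
    simpa [nsmul_eq_mul, Finset.mul_sum] using h1
  set Q : ℝ := δs * ρs * ((∑ l ∈ Finset.Icc 1 k, B l) / k) with hQdef
  have hSB : 0 ≤ ∑ l ∈ Finset.Icc 1 k, B l := Finset.sum_nonneg hBnn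
  have hQ0 : 0 ≤ Q := by
    have : (0:ℝ) ≤ (∑ l ∈ Finset.Icc 1 k, B l) / k := div_nonneg hSB hkR.le
    exact mul_nonneg (mul_nonneg hδs0 hρs0.le) this
  have hfinal2 : P ^ ((2:ℝ)/r) ≤ Q := by
    rw [hQdef, ← mul_div_assoc, le_div_iff₀ hkR]
    linarith [hsumk, mul_comm ((k:ℝ)) (P ^ ((2:ℝ)/r))]
  have h5 : P ≤ Q ^ (r/2) := by
    have hPP : P = (P ^ ((2:ℝ)/r)) ^ (r/2) := by
      rw [← Real.rpow_mul hP, show ((2:ℝ)/r) * (r/2) = 1 by field_simp, Real.rpow_one]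
    rw [hPP]
    exact Real.rpow_le_rpow (Real.rpow_nonneg hP _) hfinal2 (by positivity)
  have h6 : P ^ ((1:ℝ)/r) ≤ (Q ^ (r/2)) ^ ((1:ℝ)/r) :=
    Real.rpow_le_rpow hP h5 (by positivity)
  have h7 : (Q ^ (r/2)) ^ ((1:ℝ)/r) = Q ^ ((1:ℝ)/2) := by
    rw [← Real.rpow_mul hQ0, show (r/2) * ((1:ℝ)/r) = 1/2 by field_simp]
  have h8 : Q ^ ((1:ℝ)/2) = Real.sqrt (δs * ρs) * ((∑ l ∈ Finset.Icc 1 k, B l) / k) ^ ((1:ℝ)/2) := by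
    rw [hQdef, Real.mul_rpow (mul_nonneg hδs0 hρs0.le) (div_nonneg hSB hkR.le),
      Real.sqrt_eq_rpow]
  calc P ^ ((1:ℝ)/r) ≤ (Q ^ (r/2)) ^ ((1:ℝ)/r) := h6
    _ = Q ^ ((1:ℝ)/2) := h7
    _ = _ := h8
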